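/- Let Δ > 0 and a < b real, I = [a,b]. Define B⁻(x) = H(x) − K(x) with Beurling's H and Fejér's K, and F_I(x) = (1/2)(B⁻(Δ(x−a)) + B⁻(Δ(b−x))). Then for all real x: 0 ≤ 1_I(x) − F_I(x) ≤ K(Δ(x−a)) + K(Δ(b−x)), where 1_I is the indicator function of [a,b]. -/

import Mathlib

open Real Set Classical

/-- The Fejér kernel `K(y) = (sin πy / (πy))²`, with `K(0) = 1`. -/
noncomputable def fejerK (y : ℝ) : ℝ :=
  if y = 0 then 1 else (Real.sin (Real.pi * y) / (Real.pi * y)) ^ 2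

/-- Beurling's function `H(y) = (sin πy/π)² (∑_{n ∈ ℤ} sgn(n)/(y-n)² + 2/y)`,
extended by continuity (value `sgn y`) at the integers. -/
noncomputable def beurlingH (y : ℝ) : ℝ :=
  if ∃ n : ℤ, (n : ℝ) = y then Real.sign y
  else (Real.sin (Real.pi * y) / Real.pi) ^ 2 *
    ((∑' n : ℤ, (Int.sign n : ℝ) / (y - (n : ℝ)) ^ 2) + 2 / y)

/-- Beurling's minorant `B⁻ = H - K` of the sign function. -/
noncomputable def Bminus (y : ℝ) : ℝ := beurlingH y - fejerK y

/-- The Beurling–Selberg minorant of the indicator of `[a,b]`. -/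
noncomputable def selbergF (Δ a b x : ℝ) : ℝ :=
  (1 / 2) * (Bminus (Δ * (x - a)) + Bminus (Δ * (b - x)))

lemma summable_aux (c : ℝ) : Summable (fun n : ℕ => 1 / (c + n) ^ 2) := by
  have h : Summable (fun n : ℕ => 1 / (n : ℝ) ^ 2) :=
    Real.summable_one_div_nat_pow.mpr one_lt_two
  apply summable_of_isBigO_nat h
  rw [Asymptotics.isBigO_iff]
  refine ⟨4, ?_⟩
  filter_upwards [Filter.eventually_ge_atTop (⌈2 * |c| + 2⌉₊)] with n hn
  have hn' : 2 * |c| + 2 ≤ n := le_trans (Nat.le_ceil _) (by exact_mod_cast hn)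
  have hc : |c| ≤ n / 2 := by linarith
  have h2 : (n : ℝ) / 2 ≤ c + n := by
    have := neg_abs_le c; linarith
  have hq : (n:ℝ)^2 / 4 ≤ (c+n)^2 := by
    calc (n:ℝ)^2/4 = (n/2)^2 := by ring
    _ ≤ (c+n)^2 := by nlinarith
  have hn0 : (0:ℝ) < n := by have := abs_nonneg c; linarith
  have hcn : (0:ℝ) < c + n := by linarith
  rw [Real.norm_eq_abs, Real.norm_eq_abs, abs_of_nonneg (by positivity : (0:ℝ) ≤ 1/(c+n)^2),
    abs_of_nonneg (by positivity : (0:ℝ) ≤ 1/(n:ℝ)^2)]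
  rw [div_le_iff₀ (by positivity)]
  have heq : (4:ℝ) * (1/(n:ℝ)^2) * ((c+n)^2) = 4 * (c+n)^2 / n^2 := by ring
  rw [heq, le_div_iff₀ (by positivity)]
  nlinarith

lemma hasSum_telescope {c : ℝ} (hc : 0 < c) :
    HasSum (fun n : ℕ => 1 / ((c + n) * (c + n + 1))) (1 / c) := by
  have key : ∀ n : ℕ, 1 / ((c + n) * (c + n + 1)) = 1 / (c + n) - 1 / (c + ((n:ℝ)+1)) := by
    intro n
    have h1 : c + (n:ℝ) ≠ 0 := by positivity
    have h2 : c + ((n:ℝ) + 1) ≠ 0 := by positivity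
    rw [one_div, one_div, one_div, inv_sub_inv h1 h2]
    congr 1 <;> ring
  have hnn : ∀ n : ℕ, 0 ≤ 1 / ((c + n) * (c + n + 1)) := by
    intro n; positivity
  rw [hasSum_iff_tendsto_nat_of_nonneg hnn]
  have hsum : ∀ N : ℕ, ∑ n ∈ Finset.range N, 1 / ((c + n) * (c + n + 1)) = 1/c - 1/(c+N) := by
    intro N
    have h := Finset.sum_range_sub' (fun k : ℕ => 1/(c+(k:ℝ))) N
    simp only [Nat.cast_zero, add_zero] at h
    rw [← h]
    apply Finset.sum_congr rfl; intro n _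
    rw [key n]; push_cast; norm_num
  simp_rw [hsum]
  have ht : Filter.Tendsto (fun N : ℕ => 1/(c+(N:ℝ))) Filter.atTop (nhds 0) := by
    have : Filter.Tendsto (fun N : ℕ => c + (N:ℝ)) Filter.atTop Filter.atTop :=
      Filter.tendsto_atTop_add_const_left _ c tendsto_natCast_atTop_atTop
    exact this.inv_tendsto_atTop.congr (fun N => by simp [one_div, Pi.inv_apply])
  simpa using Filter.Tendsto.const_sub (1/c) ht


section aux
open MeasureTheory Complex

lemma parseval_sum (y : ℝ) (hy : ∀ n : ℤ, (n:ℝ) ≠ y) :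
    (Real.sin (π * y) / π)^2 * ∑' n : ℤ, 1/(y-(n:ℝ))^2 = 1 := by
  haveI : Fact (0 < (1:ℝ)) := ⟨one_pos⟩
  set f : ℝ → ℂ := fun t => Complex.exp (2 * π * Complex.I * y * t) with hf
  set F : AddCircle 1 → ℂ := AddCircle.liftIoc 1 0 f with hF
  have hFval : ∀ z : AddCircle 1, F z = f ((AddCircle.equivIoc 1 0 z : ℝ)) := fun z => rfl
  have hFnorm : ∀ z, ‖F z‖ = 1 := by
    intro z
    rw [hFval, hf]
    simp only [Complex.norm_exp]
    have h0 : (2 * (π:ℂ) * Complex.I * y * ((AddCircle.equivIoc 1 0 z : ℝ):ℂ)).re = 0 := by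
      simp [Complex.mul_re, Complex.mul_im]
    rw [h0, Real.exp_zero]
  have hmeas : Measurable F := by
    have h1 : Continuous f := by
      apply Complex.continuous_exp.comp
      continuity
    exact (h1.measurable).comp
      (measurable_subtype_coe.comp (AddCircle.measurableEquivIoc (T := 1) 0).measurable)
  have hmem : MemLp F 2 (AddCircle.haarAddCircle) := by
    apply MemLp.of_bound hmeas.aestronglyMeasurable 1
    exact Filter.Eventually.of_forall (fun z => (hFnorm z).le)
  set g := hmem.toLp F with hg
  have hco : ∀ n : ℤ, fourierCoeff (⇑g) n = fourierCoeff F n := by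
    intro n
    apply integral_congr_ae
    filter_upwards [hmem.coeFn_toLp] with z hz
    rw [hz]
  have hPar := tsum_sq_fourierCoeff g
  have hRHS : ∫ t : AddCircle 1, ‖g t‖^2 ∂AddCircle.haarAddCircle = 1 := by
    rw [integral_congr_ae (g := fun t => (1:ℝ)) ?_]
    · simp
    · filter_upwards [hmem.coeFn_toLp] with z hz
      rw [hz, hFnorm z]; norm_num
  have hcoeff : ∀ n : ℤ, fourierCoeff F n =
      (Complex.exp (2 * π * Complex.I * y) - 1) / (2 * π * Complex.I * (y - n)) := by
    intro n
    have hc : (2 * (π:ℂ) * Complex.I * ((y:ℂ) - n)) ≠ 0 := by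
      intro h
      rcases mul_eq_zero.mp h with h1 | h2
      · rcases mul_eq_zero.mp h1 with h3 | h4
        · rcases mul_eq_zero.mp h3 with h5 | h6
          · norm_num at h5
          · exact Real.pi_ne_zero (by exact_mod_cast h6)
        · exact Complex.I_ne_zero h4
      · have : (y:ℂ) = n := by linear_combination h2
        exact hy n (by exact_mod_cast this.symm)
    rw [hF, fourierCoeff_liftIoc_eq, fourierCoeffOn_eq_integral]
    have hint : ∀ t ∈ Set.uIcc (0:ℝ) (0+1), (fourier (-n) (t : AddCircle ((0:ℝ)+1-0)) : ℂ) • f t =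
        Complex.exp ((2 * π * Complex.I * ((y:ℂ) - n)) * t) := by
      intro t _
      rw [fourier_coe_apply, hf]
      simp only [smul_eq_mul]
      rw [← Complex.exp_add]
      congr 1
      push_cast
      field_simp
      ring
    rw [intervalIntegral.integral_congr hint, integral_exp_mul_complex hc]
    have hexp : Complex.exp (2 * (π:ℂ) * Complex.I * ((y:ℂ) - n) * (((0:ℝ)+1 : ℝ):ℂ)) =
        Complex.exp (2 * (π:ℂ) * Complex.I * (y:ℂ)) := by
      rw [show (2 * (π:ℂ) * Complex.I * ((y:ℂ) - n) * (((0:ℝ)+1 : ℝ):ℂ)) =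
          2 * (π:ℂ) * Complex.I * (y:ℂ) + ((-n : ℤ):ℂ) * (2 * (π:ℂ) * Complex.I) by
        push_cast; ring]
      rw [Complex.exp_add, Complex.exp_int_mul_two_pi_mul_I, mul_one]
    rw [hexp]
    simp only [Complex.ofReal_zero, mul_zero, Complex.exp_zero]
    norm_num
  have hnormsq : ∀ n : ℤ, ‖fourierCoeff F n‖^2 = (Real.sin (π*y)/π)^2 * (1/(y-(n:ℝ))^2) := by
    intro n
    have hyn : y - (n:ℝ) ≠ 0 := fun h => hy n (by linarith)
    rw [hcoeff, norm_div]
    have hnum : ‖Complex.exp (2 * π * Complex.I * y) - 1‖^2 = 4 * Real.sin (π*y)^2 := by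
      have he : 2 * (π:ℂ) * Complex.I * y = ((2*π*y : ℝ):ℂ) * Complex.I := by push_cast; ring
      rw [he, Complex.exp_mul_I]
      rw [← Complex.ofReal_cos, ← Complex.ofReal_sin]
      have : ((Real.cos (2*π*y) :ℂ)) + (Real.sin (2*π*y):ℂ) * Complex.I - 1
          = ((Real.cos (2*π*y) - 1 : ℝ):ℂ) + ((Real.sin (2*π*y):ℝ):ℂ) * Complex.I := by
        push_cast; ring
      rw [this, Complex.sq_norm, Complex.normSq_add_mul_I]
      have h2 : Real.cos (2*π*y) = 2 * Real.cos (π*y)^2 - 1 := by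
        rw [(by ring : 2*π*y = 2*(π*y)), Real.cos_two_mul]
      have h3 : Real.sin (2*π*y) = 2 * Real.sin (π*y) * Real.cos (π*y) := by
        rw [(by ring : 2*π*y = 2*(π*y)), Real.sin_two_mul]
      rw [h2, h3]
      nlinarith [Real.sin_sq_add_cos_sq (π*y)]
    have hden : ‖2 * (π:ℂ) * Complex.I * ((y:ℂ) - n)‖^2 = 4 * π^2 * (y-(n:ℝ))^2 := by
      have : ((2:ℂ) * π * Complex.I * ((y:ℂ) - n)) = ((2*π*(y-(n:ℝ)) : ℝ):ℂ) * Complex.I := by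
        push_cast; ring
      rw [this, norm_mul, Complex.norm_I, mul_one,
        Complex.norm_real, Real.norm_eq_abs, _root_.sq_abs]
      ring
    rw [div_pow, hnum, hden]
    have hπ : (π:ℝ) ≠ 0 := Real.pi_ne_zero
    field_simp
  calc (Real.sin (π * y) / π)^2 * ∑' n : ℤ, 1/(y-(n:ℝ))^2
      = ∑' n : ℤ, (Real.sin (π * y) / π)^2 * (1/(y-(n:ℝ))^2) := tsum_mul_left.symm
    _ = ∑' n : ℤ, ‖fourierCoeff F n‖^2 := by
        apply tsum_congr; intro n; rw [hnormsq n]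
    _ = ∑' n : ℤ, ‖fourierCoeff (⇑g) n‖^2 := by
        apply tsum_congr; intro n; rw [hco n]
    _ = ∫ t : AddCircle 1, ‖g t‖^2 ∂AddCircle.haarAddCircle := hPar
    _ = 1 := hRHS

end aux

lemma key_pos (y : ℝ) (hy : 0 < y) (hni : ¬∃ n : ℤ, (n:ℝ) = y) :
    |Real.sign y - beurlingH y| ≤ fejerK y := by
  have hy' : ∀ n : ℤ, (n:ℝ) ≠ y := fun n h => hni ⟨n, h⟩
  have hy0 : y ≠ 0 := ne_of_gt hy
  have hnat : Summable (fun n : ℕ => 1/(y - (n:ℝ))^2) := by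
    apply (summable_aux (-y)).congr
    intro n
    rw [show (-y + (n:ℝ)) = -(y - n) by ring, neg_sq]
  have hneg : Summable (fun n : ℕ => 1/(y + ((n:ℝ) + 1))^2) := by
    apply (summable_aux (y+1)).congr
    intro n; congr 2; ring
  have hT : Summable (fun n : ℤ => 1/(y - (n:ℝ))^2) := by
    apply Summable.of_nat_of_neg_add_one
    · exact hnat.congr (fun n => by norm_num)
    · apply hneg.congr; intro n
      congr 2; push_cast; ring
  have hS : Summable (fun n : ℤ => ((Int.sign n : ℝ)) / (y - (n:ℝ))^2) := by
    apply Summable.of_norm_bounded hT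
    intro n
    rw [norm_div]
    have h1 : ‖((Int.sign n : ℝ))‖ ≤ 1 := by
      rcases lt_trichotomy n 0 with h | h | h
      · rw [Int.sign_eq_neg_one_of_neg h]; norm_num
      · rw [h]; norm_num
      · rw [Int.sign_eq_one_of_pos h]; norm_num
    have h2 : ‖(y - (n:ℝ))^2‖ = (y - (n:ℝ))^2 := by
      rw [Real.norm_eq_abs, abs_of_nonneg (sq_nonneg _)]
    rw [h2]
    have hpos : (0:ℝ) < (y - (n:ℝ))^2 := by
      have := sub_ne_zero.mpr (Ne.symm (hy' n))
      positivity
    rw [div_le_div_iff_of_pos_right hpos]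
    exact h1
  -- decomposition of T - S
  set T := ∑' n : ℤ, 1/(y - (n:ℝ))^2 with hTdef
  set S := ∑' n : ℤ, ((Int.sign n : ℝ)) / (y - (n:ℝ))^2 with hSdef
  set P := ∑' n : ℕ, 1/((y+1) + (n:ℝ))^2 with hPdef
  set s := (Real.sin (π * y) / π)^2 with hsdef
  have hP : Summable (fun n : ℕ => 1/((y+1) + (n:ℝ))^2) := summable_aux (y+1)
  have hf1 : ∀ n : ℕ, (1/(y - ((n:ℤ):ℝ))^2 - ((Int.sign (n:ℤ) : ℝ)) / (y - ((n:ℤ):ℝ))^2)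
      = if n = 0 then 1/y^2 else 0 := by
    intro n
    rcases Nat.eq_zero_or_pos n with h | h
    · subst h; simp
    · have : Int.sign (n:ℤ) = 1 := Int.sign_eq_one_of_pos (by exact_mod_cast h)
      rw [this, if_neg (Nat.pos_iff_ne_zero.mp h)]
      push_cast
      ring
  have hf2 : ∀ n : ℕ, (1/(y - ((-(n+1):ℤ)):ℝ)^2 - ((Int.sign (-(n+1):ℤ) : ℝ)) / (y - ((-(n+1):ℤ):ℝ))^2)
      = 2 * (1/((y+1) + (n:ℝ))^2) := by
    intro n
    have hs1 : Int.sign (-(n+1):ℤ) = -1 := by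
      rw [Int.sign_neg, Int.sign_eq_one_of_pos (by positivity)]
    rw [hs1]
    have : ((-(n+1):ℤ):ℝ) = -((n:ℝ)+1) := by push_cast; ring
    rw [this, show y - -((n:ℝ)+1) = (y+1) + n by ring]
    push_cast
    ring
  have hTS : T - S = 1/y^2 + 2 * P := by
    rw [← hT.tsum_sub hS]
    rw [tsum_of_nat_of_neg_add_one]
    · congr 1
      · rw [tsum_congr hf1]
        exact tsum_ite_eq 0 (fun _ => 1/y^2)
      · rw [tsum_congr hf2]
        exact tsum_mul_left
    · apply Summable.congr _ (fun n => (hf1 n).symm)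
      apply summable_of_ne_finset_zero (s := {0})
      intro n hn
      rw [if_neg (by simpa using hn)]
    · apply Summable.congr _ (fun n => (hf2 n).symm)
      exact hP.mul_left 2
  -- bounds on P
  have hPub : P ≤ 1/y := by
    rw [← (hasSum_telescope hy).tsum_eq]
    apply Summable.tsum_le_tsum _ hP (hasSum_telescope hy).summable
    intro n
    have h1 : (0:ℝ) < y + n := by positivity
    have h2 : (0:ℝ) < y + n + 1 := by positivity
    apply one_div_le_one_div_of_le (by positivity)
    calc (y+n) * (y+n+1) ≤ (y+n+1) * (y+n+1) := by nlinarith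
      _ = ((y+1) + n)^2 := by ring
  have hPlb : 1/(y+1) ≤ P := by
    rw [← (hasSum_telescope (by linarith : (0:ℝ) < y + 1)).tsum_eq]
    apply Summable.tsum_le_tsum _ (hasSum_telescope (by linarith : (0:ℝ) < y+1)).summable hP
    intro n
    have h1 : (0:ℝ) < y + 1 + n := by positivity
    apply one_div_le_one_div_of_le (by positivity)
    nlinarith
  -- assemble
  have hs_nonneg : 0 ≤ s := sq_nonneg _
  have hK : fejerK y = s * (1/y^2) := by
    rw [fejerK, if_neg hy0, hsdef, div_pow, div_pow, mul_pow]
    ring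
  have hH : beurlingH y = 1 - s * (1/y^2) + 2 * s * (1/y - P) := by
    rw [beurlingH, if_neg hni, ← hsdef, ← hSdef]
    have hSval : S = T - (1/y^2 + 2 * P) := by linarith [hTS]
    rw [hSval]
    have hpar : s * T = 1 := parseval_sum y hy'
    have heq : s * (T - (1/y^2 + 2*P) + 2/y) = s*T - s*(1/y^2) + 2*s*(1/y - P) := by ring
    rw [heq, hpar]
  have hsign : Real.sign y = 1 := Real.sign_of_pos hy
  have hq1 : 0 ≤ 1/y - P := by linarith
  have hq2 : 1/y - P ≤ 1/y^2 := by
    have : 1/y - 1/(y+1) ≤ 1/y^2 := by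
      rw [div_sub_div _ _ hy0 (by linarith : y+1 ≠ 0)]
      rw [div_le_div_iff₀ (by positivity) (by positivity)]
      nlinarith
    linarith
  have hb1 : 0 ≤ 2 * s * (1/y - P) := by positivity
  have hb2 : 2 * s * (1/y - P) ≤ 2 * (s * (1/y^2)) := by
    rw [mul_assoc]
    apply mul_le_mul_of_nonneg_left _ (by norm_num : (0:ℝ) ≤ 2)
    exact mul_le_mul_of_nonneg_left hq2 hs_nonneg
  rw [hsign, hH, hK, abs_le]
  constructor <;> nlinarith

lemma fejerK_nonneg (y : ℝ) : 0 ≤ fejerK y := by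
  rw [fejerK]; split
  · norm_num
  · exact sq_nonneg _

lemma fejerK_zero : fejerK 0 = 1 := by rw [fejerK, if_pos rfl]

lemma fejerK_neg (y : ℝ) : fejerK (-y) = fejerK y := by
  rcases eq_or_ne y 0 with h | h
  · rw [h, neg_zero]
  · rw [fejerK, fejerK, if_neg (neg_ne_zero.mpr h), if_neg h,
      show π * -y = -(π*y) by ring, Real.sin_neg, neg_div_neg_eq]

lemma beurlingH_neg (y : ℝ) : beurlingH (-y) = - beurlingH y := by
  by_cases hni : ∃ n : ℤ, (n:ℝ) = y
  · have hni' : ∃ n : ℤ, (n:ℝ) = -y := by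
      rcases hni with ⟨n, hn⟩; exact ⟨-n, by push_cast; rw [hn]⟩
    rw [beurlingH, beurlingH, if_pos hni, if_pos hni', Real.sign_neg]
  · have hni' : ¬∃ n : ℤ, (n:ℝ) = -y := by
      rintro ⟨n, hn⟩
      exact hni ⟨-n, by push_cast; linarith⟩
    rw [beurlingH, beurlingH, if_neg hni, if_neg hni']
    have h1 : (Real.sin (π * -y) / π)^2 = (Real.sin (π * y) / π)^2 := by
      rw [show π * -y = -(π*y) by ring, Real.sin_neg, neg_div, neg_sq]
    rw [h1]
    have h2 : ∑' n : ℤ, (Int.sign n : ℝ) / (-y - (n:ℝ))^2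
        = - ∑' n : ℤ, (Int.sign n : ℝ) / (y - (n:ℝ))^2 := by
      rw [← tsum_neg, ← (Equiv.neg ℤ).tsum_eq (fun n : ℤ => (Int.sign n : ℝ) / (-y - (n:ℝ))^2)]
      apply tsum_congr
      intro n
      simp only [Equiv.neg_apply]
      rw [Int.sign_neg]
      push_cast
      rw [show -y - (-(n:ℝ)) = -(y - n) by ring, neg_sq]
      ring
    rw [h2]
    have h3 : 2 / -y = -(2/y) := by ring
    rw [h3]
    ring

lemma key_abs (y : ℝ) : |Real.sign y - beurlingH y| ≤ fejerK y := by
  by_cases hni : ∃ n : ℤ, (n:ℝ) = y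
  · rw [beurlingH, if_pos hni, sub_self, abs_zero]
    exact fejerK_nonneg y
  · rcases lt_trichotomy y 0 with h | h | h
    · have hpos : 0 < -y := by linarith
      have hni' : ¬∃ n : ℤ, (n:ℝ) = -y := by
        rintro ⟨n, hn⟩; exact hni ⟨-n, by push_cast; linarith⟩
      have := key_pos (-y) hpos hni'
      rw [Real.sign_neg, beurlingH_neg, fejerK_neg] at this
      rw [show -Real.sign y - -beurlingH y = -(Real.sign y - beurlingH y) by ring, abs_neg] at this
      exact this
    · exact absurd ⟨0, by simp [h.symm]⟩ hni
    · exact key_pos y h hni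

lemma Bminus_le (y : ℝ) : Bminus y ≤ Real.sign y := by
  have := abs_le.mp (key_abs y)
  rw [Bminus]; linarith [this.1]

lemma le_Bminus (y : ℝ) : Real.sign y - 2 * fejerK y ≤ Bminus y := by
  have := abs_le.mp (key_abs y)
  rw [Bminus]; linarith [this.2]

lemma Bminus_zero : Bminus 0 = -1 := by
  rw [Bminus, beurlingH, if_pos ⟨0, by simp⟩, Real.sign_zero, fejerK_zero]
  norm_num

/-- for all real `x`,
`0 ≤ 1_{[a,b]}(x) - F_I(x) ≤ K(Δ(x-a)) + K(Δ(b-x))`. -/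
theorem selbergF_minorant (Δ a b : ℝ) (hΔ : 0 < Δ) (hab : a < b) (x : ℝ) :
    0 ≤ Set.indicator (Set.Icc a b) (fun _ => (1:ℝ)) x - selbergF Δ a b x ∧
    Set.indicator (Set.Icc a b) (fun _ => (1:ℝ)) x - selbergF Δ a b x ≤
      fejerK (Δ * (x - a)) + fejerK (Δ * (b - x)) := by
  set u := Δ * (x - a) with hu
  set v := Δ * (b - x) with hv
  have hu1 := Bminus_le u
  have hu2 := le_Bminus u
  have hv1 := Bminus_le v
  have hv2 := le_Bminus v
  have hKu := fejerK_nonneg u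
  have hKv := fejerK_nonneg v
  rw [selbergF, ← hu, ← hv]
  rcases lt_trichotomy x a with hxa | hxa | hxa
  · -- x < a
    have hmem : x ∉ Set.Icc a b := fun h => absurd h.1 (not_le.mpr hxa)
    rw [Set.indicator_of_notMem hmem]
    have hsu : Real.sign u = -1 := Real.sign_of_neg (by rw [hu]; nlinarith)
    have hsv : Real.sign v = 1 := Real.sign_of_pos (by rw [hv]; nlinarith)
    rw [hsu] at hu1 hu2; rw [hsv] at hv1 hv2
    constructor <;> [linarith; linarith]
  · -- x = a
    have hmem : x ∈ Set.Icc a b := ⟨le_of_eq hxa.symm, by linarith⟩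
    rw [Set.indicator_of_mem hmem]
    have hu0 : u = 0 := by rw [hu, hxa]; ring
    have hsv : Real.sign v = 1 := Real.sign_of_pos (by rw [hv]; nlinarith)
    rw [hsv] at hv1 hv2
    rw [hu0, Bminus_zero, fejerK_zero]
    constructor <;> [linarith; linarith]
  · rcases lt_trichotomy x b with hxb | hxb | hxb
    · -- a < x < b
      have hmem : x ∈ Set.Icc a b := ⟨le_of_lt hxa, le_of_lt hxb⟩
      rw [Set.indicator_of_mem hmem]
      have hsu : Real.sign u = 1 := Real.sign_of_pos (by rw [hu]; nlinarith)
      have hsv : Real.sign v = 1 := Real.sign_of_pos (by rw [hv]; nlinarith)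
      rw [hsu] at hu1 hu2; rw [hsv] at hv1 hv2
      constructor <;> [linarith; linarith]
    · -- x = b
      have hmem : x ∈ Set.Icc a b := ⟨by linarith, le_of_eq hxb⟩
      rw [Set.indicator_of_mem hmem]
      have hv0 : v = 0 := by rw [hv, hxb]; ring
      have hsu : Real.sign u = 1 := Real.sign_of_pos (by rw [hu]; nlinarith)
      rw [hsu] at hu1 hu2
      rw [hv0, Bminus_zero, fejerK_zero]
      constructor <;> [linarith; linarith]
    · -- b < x
      have hmem : x ∉ Set.Icc a b := fun h => absurd h.2 (not_le.mpr hxb)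
      rw [Set.indicator_of_notMem hmem]
      have hsu : Real.sign u = 1 := Real.sign_of_pos (by rw [hu]; nlinarith)
      have hsv : Real.sign v = -1 := Real.sign_of_neg (by rw [hv]; nlinarith)
      rw [hsu] at hu1 hu2; rw [hsv] at hv1 hv2
      constructor <;> [linarith; linarith]
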